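/- The expected height of a randomly built binary search tree on n distinct keys is O(log n); more precisely, the expected height is at most 3·log₂ n for all n ≥ 2. -/

import Mathlib

/-- Binary search trees with natural-number keys. -/
inductive BT : Type
  | nil : BT
  | node (l : BT) (k : ℕ) (r : BT) : BT

namespace BT

/-- Standard BST insertion. -/
def ins (v : ℕ) : BT → BT
  | nil => node nil v nil
  | node l k r => if v < k then node (ins v l) k r else node l k (ins v r)

/-- Height: number of nodes on the longest root-to-leaf path. -/
def height : BT → ℕ
  | nil => 0
  | node l _ r => 1 + max (height l) (height r)

/-- Build a BST by inserting the keys of a list in order into an empty tree. -/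
def build (xs : List ℕ) : BT := xs.foldl (fun t v => ins v t) nil

end BT

namespace BTAux
open BT

lemma foldl_node (xs : List ℕ) : ∀ (l r : BT) (k : ℕ),
    xs.foldl (fun t v => ins v t) (node l k r) =
      node ((xs.filter (fun y => y < k)).foldl (fun t v => ins v t) l) k
        ((xs.filter (fun y => ¬ y < k)).foldl (fun t v => ins v t) r) := by
  induction xs with
  | nil => intro l r k; simp
  | cons y ys ih =>
      intro l r k
      by_cases h : y < k
      · simp [List.foldl_cons, ins, h, ih]
      · have h' : k ≤ y := le_of_not_gt h
        simp [List.foldl_cons, ins, h, ih, List.filter_cons, h']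

lemma build_cons (x : ℕ) (ys : List ℕ) :
    build (x :: ys) = node (build (ys.filter (fun y => y < x))) x
      (build (ys.filter (fun y => ¬ y < x))) := by
  show (ys.foldl (fun t v => ins v t) (node nil x nil)) = _
  rw [foldl_node]; rfl

lemma height_build_cons (x : ℕ) (ys : List ℕ) :
    (build (x :: ys)).height =
      1 + max (build (ys.filter (fun y => y < x))).height
              (build (ys.filter (fun y => ¬ y < x))).height := by
  rw [build_cons]; rfl

lemma height_ins_le (v : ℕ) (t : BT) : (ins v t).height ≤ 1 + t.height := by
  induction t with
  | nil => simp [ins, height]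
  | node l k r ihl ihr =>
      by_cases h : v < k <;> simp [ins, h, height] <;> omega

lemma height_build_le (xs : List ℕ) : (build xs).height ≤ xs.length := by
  suffices h : ∀ t : BT, (xs.foldl (fun t v => ins v t) t).height ≤ xs.length + t.height by
    simpa [build, height] using h nil
  induction xs with
  | nil => intro t; simp
  | cons y ys ih =>
      intro t
      simp only [List.foldl_cons, List.length_cons]
      calc (ys.foldl (fun t v => ins v t) (ins y t)).height ≤ ys.length + (ins y t).height := ih _
        _ ≤ ys.length + (1 + t.height) := by have := height_ins_le y t; omega
        _ = ys.length + 1 + t.height := by omega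

end BTAux


namespace BTAux

/-- All permutations of a list, with fuel. -/
def permsF : ℕ → List ℕ → Multiset (List ℕ)
  | 0, _ => {[]}
  | (n+1), l => (l : Multiset ℕ).bind fun x => (permsF n (l.erase x)).map (x :: ·)

def perms (l : List ℕ) : Multiset (List ℕ) := permsF l.length l

lemma permsF_zero (l : List ℕ) : permsF 0 l = {[]} := rfl

lemma permsF_succ (n : ℕ) (l : List ℕ) :
    permsF (n+1) l = (l : Multiset ℕ).bind fun x => (permsF n (l.erase x)).map (x :: ·) := rfl

lemma perms_nil : perms [] = {[]} := rfl

lemma perms_eq (l : List ℕ) (hl : l ≠ []) :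
    perms l = (l : Multiset ℕ).bind fun x => (perms (l.erase x)).map (x :: ·) := by
  obtain ⟨n, hn⟩ : ∃ n, l.length = n + 1 := by
    cases l with
    | nil => exact absurd rfl hl
    | cons a t => exact ⟨t.length, rfl⟩
  unfold perms
  rw [hn, permsF_succ]
  refine Multiset.bind_congr ?_
  intro x hx
  rw [List.length_erase_of_mem (by exact_mod_cast hx), hn]
  simp

lemma mem_permsF (n : ℕ) : ∀ (l : List ℕ), l.length = n →
    ∀ xs, xs ∈ permsF n l ↔ xs.Perm l := by
  induction n with
  | zero =>
      intro l hl xs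
      rw [List.length_eq_zero_iff] at hl
      subst hl
      simp only [permsF_zero, Multiset.mem_singleton]
      constructor
      · rintro rfl; exact List.Perm.refl _
      · intro h; exact h.eq_nil
  | succ n ih =>
      intro l hl xs
      rw [permsF_succ]
      simp only [Multiset.mem_bind, Multiset.mem_map, Multiset.mem_coe]
      constructor
      · rintro ⟨x, hx, ys, hys, rfl⟩
        have hy : ys.Perm (l.erase x) :=
          (ih (l.erase x) (by rw [List.length_erase_of_mem hx, hl]; rfl) ys).1 hys
        exact (hy.cons x).trans (List.perm_cons_erase hx).symm
      · intro hperm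
        cases xs with
        | nil =>
            exfalso
            have := hperm.length_eq
            simp [hl] at this
        | cons x ys =>
            have hx : x ∈ l := hperm.mem_iff.mp List.mem_cons_self
            refine ⟨x, hx, ys, ?_, rfl⟩
            rw [ih (l.erase x) (by rw [List.length_erase_of_mem hx, hl]; rfl)]
            have : (x :: ys).Perm (x :: l.erase x) := hperm.trans (List.perm_cons_erase hx)
            exact this.cons_inv

lemma mem_perms (l : List ℕ) (xs : List ℕ) : xs ∈ perms l ↔ xs.Perm l :=
  mem_permsF l.length l rfl xs

lemma nodup_permsF (n : ℕ) : ∀ (l : List ℕ), l.length = n → l.Nodup →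
    (permsF n l).Nodup := by
  induction n with
  | zero => intro l _ _; simp [permsF_zero]
  | succ n ih =>
      intro l hl hnd
      rw [permsF_succ]
      apply Multiset.nodup_bind.2
      constructor
      · intro x hx
        apply Multiset.Nodup.map (fun a b h => by injection h)
        exact ih (l.erase x) (by rw [List.length_erase_of_mem (by exact_mod_cast hx), hl]; rfl)
          (List.Nodup.erase x hnd)
      · rw [Multiset.pairwise_coe_iff_pairwise]
        refine hnd.imp ?_
        intro a b hab
        rw [Function.onFun, Multiset.disjoint_left]
        rintro zs hza hzb
        simp only [Multiset.mem_map] at hza hzb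
        obtain ⟨u, -, rfl⟩ := hza
        obtain ⟨v, -, hv⟩ := hzb
        exact hab (by injection hv with h1 h2; exact h1.symm)

lemma nodup_perms (l : List ℕ) (h : l.Nodup) : (perms l).Nodup :=
  nodup_permsF l.length l rfl h

lemma card_permsF (n : ℕ) : ∀ (l : List ℕ), l.length = n →
    Multiset.card (permsF n l) = Nat.factorial n := by
  induction n with
  | zero => intro l _; simp [permsF_zero]
  | succ n ih =>
      intro l hl
      rw [permsF_succ]
      rw [Multiset.card_bind]
      have hrep : Multiset.map (Multiset.card ∘ fun x => Multiset.map (fun y => x :: y)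
          (permsF n (l.erase x))) (l : Multiset ℕ) =
          Multiset.replicate l.length (Nat.factorial n) := by
        refine Multiset.eq_replicate.2 ⟨by simp, ?_⟩
        intro b hb
        simp only [Multiset.mem_map, Multiset.mem_coe, Function.comp_apply] at hb
        obtain ⟨x, hx, rfl⟩ := hb
        rw [Multiset.card_map]
        exact ih (l.erase x) (by rw [List.length_erase_of_mem hx, hl]; rfl)
      rw [hrep, Multiset.sum_replicate]
      simp [hl, Nat.factorial_succ, Nat.mul_comm]

end BTAux

namespace BTAux

/-- Sum of `g` over all permutations of `l`. -/
def W (l : List ℕ) (g : List ℕ → ℕ) : ℕ := ((perms l).map g).sum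

lemma W_nil (g : List ℕ → ℕ) : W [] g = g [] := by simp [W, perms_nil]

lemma W_eq_sum (l : List ℕ) (hnd : l.Nodup) (hne : l ≠ []) (g : List ℕ → ℕ) :
    W l g = ∑ x ∈ l.toFinset, W (l.erase x) (fun zs => g (x :: zs)) := by
  unfold W
  rw [perms_eq l hne, Multiset.map_bind, Multiset.sum_bind]
  rw [List.sum_toFinset _ hnd]
  simp [Multiset.map_map, Function.comp_def]

lemma W_mono {l : List ℕ} {g g' : List ℕ → ℕ} (h : ∀ xs, g xs ≤ g' xs) :
    W l g ≤ W l g' := by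
  unfold W
  exact Multiset.sum_map_le_sum_map _ _ (fun xs _ => h xs)

lemma W_add (l : List ℕ) (g g' : List ℕ → ℕ) :
    W l (fun xs => g xs + g' xs) = W l g + W l g' := by
  unfold W
  rw [← Multiset.sum_map_add]

lemma W_mul (l : List ℕ) (c : ℕ) (g : List ℕ → ℕ) :
    W l (fun xs => c * g xs) = c * W l g := by
  unfold W
  rw [Multiset.sum_map_mul_left]

/-- filtering commutes with erasing an element not satisfying the predicate -/
lemma filter_erase_neg (p : ℕ → Bool) (x : ℕ) (hx : p x = false) :
    ∀ l : List ℕ, (l.erase x).filter p = l.filter p := by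
  intro l
  induction l with
  | nil => simp
  | cons y l ih =>
      by_cases hyx : y = x
      · subst hyx
        rw [List.erase_cons_head, List.filter_cons_of_neg (by simp [hx])]
      · rw [List.erase_cons_tail (by simpa using hyx : ¬ (y == x) = true)]
        by_cases hpy : p y
        · rw [List.filter_cons_of_pos hpy, List.filter_cons_of_pos hpy, ih]
        · rw [List.filter_cons_of_neg (by simpa using hpy),
            List.filter_cons_of_neg (by simpa using hpy), ih]

/-- filtering commutes with erasing an element satisfying the predicate -/
lemma filter_erase_pos (p : ℕ → Bool) (x : ℕ) (hx : p x = true) :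
    ∀ l : List ℕ, (l.erase x).filter p = (l.filter p).erase x := by
  intro l
  induction l with
  | nil => simp
  | cons y l ih =>
      by_cases hyx : y = x
      · subst hyx
        rw [List.erase_cons_head, List.filter_cons_of_pos hx, List.erase_cons_head]
      · rw [List.erase_cons_tail (by simpa using hyx : ¬ (y == x) = true)]
        by_cases hpy : p y
        · rw [List.filter_cons_of_pos hpy, List.filter_cons_of_pos hpy,
            List.erase_cons_tail (by simpa using hyx : ¬ (y == x) = true), ih]
        · rw [List.filter_cons_of_neg (by simpa using hpy),
            List.filter_cons_of_neg (by simpa using hpy), ih]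

lemma length_filter_not (p : ℕ → Bool) (l : List ℕ) :
    (l.filter p).length + (l.filter (fun y => !p y)).length = l.length := by
  have := (List.filter_append_perm p l).length_eq
  simpa [List.length_append] using this

end BTAux

namespace BTAux

lemma W_congr {l : List ℕ} {g g' : List ℕ → ℕ} (h : ∀ xs, xs.Perm l → g xs = g' xs) :
    W l g = W l g' := by
  unfold W
  refine congrArg Multiset.sum (Multiset.map_congr rfl ?_)
  intro xs hxs
  exact h xs ((mem_perms l xs).1 hxs)

lemma card_perms (l : List ℕ) : Multiset.card (perms l) = Nat.factorial l.length :=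
  card_permsF l.length l rfl

lemma W_const (l : List ℕ) (c : ℕ) : W l (fun _ => c) = Nat.factorial l.length * c := by
  unfold W
  rw [Multiset.map_const', Multiset.sum_replicate, card_perms]
  simp [Nat.mul_comm]

lemma filter_count : ∀ (N : ℕ) (t : List ℕ), t.length = N → t.Nodup →
    ∀ (p : ℕ → Bool) (g : List ℕ → ℕ),
    Nat.factorial (t.filter p).length * W t (fun ys => g (ys.filter p))
      = Nat.factorial N * W (t.filter p) g := by
  intro N
  induction N with
  | zero =>
      intro t ht _ p g
      rw [List.length_eq_zero_iff] at ht
      subst ht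
      simp [W_nil]
  | succ N ih =>
      intro t ht hnd p g
      have hne : t ≠ [] := by intro h; subst h; simp at ht
      set a := (t.filter p).length with ha
      rw [W_eq_sum t hnd hne, Finset.mul_sum]
      have key : ∀ x ∈ t.toFinset,
          Nat.factorial a * W (t.erase x) (fun zs => g ((x :: zs).filter p))
            = if p x then a * Nat.factorial N *
                  W ((t.filter p).erase x) (fun zs => g (x :: zs))
              else Nat.factorial N * W (t.filter p) g := by
        intro x hx
        rw [List.mem_toFinset] at hx
        have hlenerase : (t.erase x).length = N := by
          rw [List.length_erase_of_mem hx, ht]; rfl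
        have hnderase : (t.erase x).Nodup := List.Nodup.erase x hnd
        by_cases hp : p x
        · rw [if_pos hp]
          have hfun : (fun zs => g ((x :: zs).filter p)) =
              fun zs => g (x :: zs.filter p) := by
            funext zs; rw [List.filter_cons_of_pos hp]
          rw [hfun]
          have hfe : (t.erase x).filter p = (t.filter p).erase x :=
            filter_erase_pos p x hp t
          have hxf : x ∈ t.filter p := List.mem_filter.2 ⟨hx, hp⟩
          have hapos : 0 < a := by
            rw [ha]; exact List.length_pos_iff.2 (fun h => by simp [h] at hxf)
          have IH := ih (t.erase x) hlenerase hnderase p (fun zs => g (x :: zs))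
          rw [hfe] at IH
          have hlen2 : ((t.filter p).erase x).length = a - 1 := by
            rw [List.length_erase_of_mem hxf]
          rw [hlen2] at IH
          have hafact : Nat.factorial a = a * Nat.factorial (a - 1) := by
            exact (Nat.mul_factorial_pred hapos.ne').symm
          rw [hafact, Nat.mul_assoc, IH]
          ring
        · rw [if_neg hp]
          have hfun : (fun zs => g ((x :: zs).filter p)) =
              fun zs => g (zs.filter p) := by
            funext zs; rw [List.filter_cons_of_neg (by simpa using hp)]
          rw [hfun]
          have hfe : (t.erase x).filter p = t.filter p :=
            filter_erase_neg p x (by simpa using hp) t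
          have IH := ih (t.erase x) hlenerase hnderase p g
          rw [hfe] at IH
          exact IH
      rw [Finset.sum_congr rfl key, Finset.sum_ite]
      have hpos : t.toFinset.filter (fun x => p x = true) = (t.filter p).toFinset := by
        rw [List.toFinset_filter]
      have hneg : t.toFinset.filter (fun x => ¬ p x = true)
          = (t.filter (fun y => !p y)).toFinset := by
        rw [List.toFinset_filter]
        apply Finset.filter_congr
        intro y _
        simp
      rw [hpos, hneg]
      have part1 : (∑ x ∈ (t.filter p).toFinset,
          a * Nat.factorial N * W ((t.filter p).erase x) (fun zs => g (x :: zs)))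
          = a * (Nat.factorial N * W (t.filter p) g) := by
        by_cases hfil : t.filter p = []
        · have ha0 : a = 0 := by rw [ha, hfil]; rfl
          rw [hfil, ha0]
          simp
        · rw [← Finset.mul_sum]
          rw [← W_eq_sum (t.filter p) (List.Nodup.filter p hnd) hfil g]
          ring
      have hble : a ≤ N + 1 := by
        rw [ha, ← ht]; exact List.length_filter_le p t
      have hcard : (t.filter (fun y => !p y)).toFinset.card = (N + 1) - a := by
        rw [List.toFinset_card_of_nodup (List.Nodup.filter _ hnd)]
        have h2 := length_filter_not p t
        rw [ht, ← ha] at h2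
        omega
      rw [part1, Finset.sum_const, hcard, smul_eq_mul, ← Nat.add_mul]
      have h3 : a + (N + 1 - a) = N + 1 := by omega
      rw [h3, Nat.factorial_succ, Nat.mul_assoc]

end BTAux

namespace BTAux

lemma sum_rank (F : Finset ℕ) (f : ℕ → ℕ) :
    ∑ x ∈ F, f ((F.filter (fun y => y < x)).card) = ∑ i ∈ Finset.range F.card, f i := by
  set r : ℕ → ℕ := fun x => (F.filter (fun y => y < x)).card with hr
  have hinj : ∀ x ∈ F, ∀ y ∈ F, r x = r y → x = y := by
    have hmono : ∀ x ∈ F, ∀ y ∈ F, x < y → r x < r y := by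
      intro x hx y _ hxy
      apply Finset.card_lt_card
      constructor
      · intro z hz
        rw [Finset.mem_filter] at *
        exact ⟨hz.1, hz.2.trans hxy⟩
      · intro hsub
        have : x ∈ F.filter (fun y => y < x) := hsub (Finset.mem_filter.2 ⟨hx, hxy⟩)
        simp at this
    intro x hx y hy hxy
    rcases lt_trichotomy x y with h | h | h
    · exact absurd hxy (Nat.ne_of_lt (hmono x hx y hy h))
    · exact h
    · exact absurd hxy.symm (Nat.ne_of_lt (hmono y hy x hx h))
  have himg : Finset.image r F = Finset.range F.card := by
    apply Finset.eq_of_subset_of_card_le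
    · intro i hi
      rw [Finset.mem_image] at hi
      obtain ⟨x, hx, rfl⟩ := hi
      rw [Finset.mem_range]
      have hsub : F.filter (fun y => y < x) ⊆ F.erase x := by
        intro z hz
        rw [Finset.mem_filter] at hz
        exact Finset.mem_erase.2 ⟨Nat.ne_of_lt hz.2, hz.1⟩
      calc r x ≤ (F.erase x).card := Finset.card_le_card hsub
        _ < F.card := Finset.card_erase_lt_of_mem hx
    · rw [Finset.card_range, Finset.card_image_of_injOn hinj]
  rw [← himg, Finset.sum_image hinj]

def Pc (k : ℕ) : ℕ := (k+1)*(k+2)*(k+3)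

lemma sum_Pc (N : ℕ) : 4 * ∑ i ∈ Finset.range N, Pc i = N*(N+1)*(N+2)*(N+3) := by
  induction N with
  | zero => simp
  | succ N ih =>
      rw [Finset.sum_range_succ, Nat.mul_add, ih]
      simp only [Pc]
      ring

lemma pow_height_cons (x : ℕ) (zs : List ℕ) :
    2 ^ (BT.build (x :: zs)).height ≤
      2 * (2 ^ (BT.build (zs.filter (fun y => y < x))).height
         + 2 ^ (BT.build (zs.filter (fun y => ¬ y < x))).height) := by
  rw [height_build_cons, pow_add, pow_one]
  apply Nat.mul_le_mul_left
  rcases max_cases (BT.build (zs.filter (fun y => y < x))).height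
      (BT.build (zs.filter (fun y => ¬ y < x))).height with ⟨h, -⟩ | ⟨h, -⟩ <;>
    rw [h] <;> first
    | exact Nat.le_add_right _ _
    | exact Nat.le_add_left _ _

lemma main_bound : ∀ (N : ℕ) (s : List ℕ), s.length = N → s.Nodup →
    6 * W s (fun xs => 2 ^ (BT.build xs).height) ≤ Nat.factorial N * Pc N := by
  intro N
  induction N using Nat.strong_induction_on with
  | _ N ih =>
  intro s hs hnd
  match N, hs with
  | 0, hs =>
      rw [List.length_eq_zero_iff] at hs
      subst hs
      rw [W_nil]
      simp [BT.build, BT.height, Pc]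
  | N + 1, hs =>
      have hne : s ≠ [] := by intro h; subst h; simp at hs
      rw [W_eq_sum s hnd hne, Finset.mul_sum]
      set r : ℕ → ℕ := fun x => (s.toFinset.filter (fun y => y < x)).card with hr
      have key : ∀ x ∈ s.toFinset,
          6 * W (s.erase x) (fun zs => 2 ^ (BT.build (x :: zs)).height)
            ≤ 2 * (Nat.factorial N * (Pc (r x) + Pc (N - r x))) := by
        intro x hx
        rw [List.mem_toFinset] at hx
        set t := s.erase x with htdef
        have hlent : t.length = N := by
          rw [htdef, List.length_erase_of_mem hx, hs]; rfl
        have hndt : t.Nodup := List.Nodup.erase x hnd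
        set pL : ℕ → Bool := fun y => decide (y < x) with hpL
        set pR : ℕ → Bool := fun y => decide (¬ y < x) with hpR
        set a := (t.filter pL).length with hadef
        set b := (t.filter pR).length with hbdef
        -- a + b = N
        have hab : a + b = N := by
          have hRL : t.filter pR = t.filter (fun y => !pL y) := by
            apply List.filter_congr
            intro y _
            simp only [hpL, hpR, decide_not]
          rw [hadef, hbdef, hRL, ← hlent]
          exact length_filter_not pL t
        -- a = r x
        have har : a = r x := by
          have h1 : t.filter pL = s.filter pL := by
            rw [htdef]
            exact filter_erase_neg pL x (by simp [hpL]) s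
          rw [hadef, h1, hr]
          rw [← List.toFinset_card_of_nodup (List.Nodup.filter pL hnd),
            List.toFinset_filter]
          congr 1
          apply Finset.filter_congr
          intro y _
          simp [hpL]
        -- pointwise bound
        have hpoint : W t (fun zs => 2 ^ (BT.build (x :: zs)).height)
            ≤ 2 * (W t (fun ys => 2 ^ (BT.build (ys.filter pL)).height)
                 + W t (fun ys => 2 ^ (BT.build (ys.filter pR)).height)) := by
          calc W t (fun zs => 2 ^ (BT.build (x :: zs)).height)
              ≤ W t (fun zs => 2 * (2 ^ (BT.build (zs.filter pL)).height
                  + 2 ^ (BT.build (zs.filter pR)).height)) :=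
                W_mono (fun zs => pow_height_cons x zs)
            _ = 2 * (W t (fun ys => 2 ^ (BT.build (ys.filter pL)).height)
                 + W t (fun ys => 2 ^ (BT.build (ys.filter pR)).height)) := by
                rw [← W_add]; rw [W_mul]
        -- filtered bounds via filter_count + ih
        have hL : 6 * W t (fun ys => 2 ^ (BT.build (ys.filter pL)).height)
            ≤ Nat.factorial N * Pc a := by
          have hfc := filter_count N t hlent hndt pL (fun xs => 2 ^ (BT.build xs).height)
          have hihL := ih a (by omega) (t.filter pL) rfl (List.Nodup.filter pL hndt)
          have h2 : Nat.factorial a * (6 * W t (fun ys => 2 ^ (BT.build (ys.filter pL)).height))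
              ≤ Nat.factorial a * (Nat.factorial N * Pc a) := by
            calc Nat.factorial a * (6 * W t (fun ys => 2 ^ (BT.build (ys.filter pL)).height))
                = 6 * (Nat.factorial a * W t (fun ys => 2 ^ (BT.build (ys.filter pL)).height)) := by ring
              _ = 6 * (Nat.factorial N * W (t.filter pL) (fun xs => 2 ^ (BT.build xs).height)) := by rw [hfc]
              _ = Nat.factorial N * (6 * W (t.filter pL) (fun xs => 2 ^ (BT.build xs).height)) := by ring
              _ ≤ Nat.factorial N * (Nat.factorial a * Pc a) := Nat.mul_le_mul_left _ hihL
              _ = Nat.factorial a * (Nat.factorial N * Pc a) := by ring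
          exact Nat.le_of_mul_le_mul_left h2 (Nat.factorial_pos a)
        have hR : 6 * W t (fun ys => 2 ^ (BT.build (ys.filter pR)).height)
            ≤ Nat.factorial N * Pc b := by
          have hfc := filter_count N t hlent hndt pR (fun xs => 2 ^ (BT.build xs).height)
          have hihR := ih b (by omega) (t.filter pR) rfl (List.Nodup.filter pR hndt)
          have h2 : Nat.factorial b * (6 * W t (fun ys => 2 ^ (BT.build (ys.filter pR)).height))
              ≤ Nat.factorial b * (Nat.factorial N * Pc b) := by
            calc Nat.factorial b * (6 * W t (fun ys => 2 ^ (BT.build (ys.filter pR)).height))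
                = 6 * (Nat.factorial b * W t (fun ys => 2 ^ (BT.build (ys.filter pR)).height)) := by ring
              _ = 6 * (Nat.factorial N * W (t.filter pR) (fun xs => 2 ^ (BT.build xs).height)) := by rw [hfc]
              _ = Nat.factorial N * (6 * W (t.filter pR) (fun xs => 2 ^ (BT.build xs).height)) := by ring
              _ ≤ Nat.factorial N * (Nat.factorial b * Pc b) := Nat.mul_le_mul_left _ hihR
              _ = Nat.factorial b * (Nat.factorial N * Pc b) := by ring
          exact Nat.le_of_mul_le_mul_left h2 (Nat.factorial_pos b)
        have hb : b = N - a := by omega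
        calc 6 * W t (fun zs => 2 ^ (BT.build (x :: zs)).height)
            ≤ 6 * (2 * (W t (fun ys => 2 ^ (BT.build (ys.filter pL)).height)
                 + W t (fun ys => 2 ^ (BT.build (ys.filter pR)).height))) :=
              Nat.mul_le_mul_left _ hpoint
          _ = 2 * (6 * W t (fun ys => 2 ^ (BT.build (ys.filter pL)).height)
               + 6 * W t (fun ys => 2 ^ (BT.build (ys.filter pR)).height)) := by ring
          _ ≤ 2 * (Nat.factorial N * Pc a + Nat.factorial N * Pc b) := by
              apply Nat.mul_le_mul_left
              omega
          _ = 2 * (Nat.factorial N * (Pc a + Pc b)) := by ring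
          _ = 2 * (Nat.factorial N * (Pc (r x) + Pc (N - r x))) := by rw [har, hb, har]
      calc ∑ x ∈ s.toFinset, 6 * W (s.erase x) (fun zs => 2 ^ (BT.build (x :: zs)).height)
          ≤ ∑ x ∈ s.toFinset, 2 * (Nat.factorial N * (Pc (r x) + Pc (N - r x))) :=
            Finset.sum_le_sum key
        _ = 2 * Nat.factorial N * (∑ x ∈ s.toFinset, (Pc (r x) + Pc (N - r x))) := by
            rw [Finset.mul_sum]; apply Finset.sum_congr rfl; intro x _; ring
        _ = 2 * Nat.factorial N * ((∑ x ∈ s.toFinset, Pc (r x))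
              + ∑ x ∈ s.toFinset, Pc (N - r x)) := by rw [Finset.sum_add_distrib]
        _ = Nat.factorial (N+1) * Pc (N+1) := by
            have hcard : s.toFinset.card = N + 1 := by
              rw [List.toFinset_card_of_nodup hnd, hs]
            have e1 : (∑ x ∈ s.toFinset, Pc (r x)) = ∑ i ∈ Finset.range (N+1), Pc i := by
              rw [hr]
              rw [sum_rank s.toFinset Pc, hcard]
            have e2 : (∑ x ∈ s.toFinset, Pc (N - r x)) = ∑ i ∈ Finset.range (N+1), Pc i := by
              rw [hr, sum_rank s.toFinset (fun i => Pc (N - i)), hcard]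
              have := Finset.sum_range_reflect Pc (N+1)
              simpa using this
            rw [e1, e2]
            have h4 : 2 * Nat.factorial N * (∑ i ∈ Finset.range (N+1), Pc i
                + ∑ i ∈ Finset.range (N+1), Pc i)
                = Nat.factorial N * (4 * ∑ i ∈ Finset.range (N+1), Pc i) := by ring
            rw [h4, sum_Pc (N+1)]
            rw [Nat.factorial_succ]
            simp only [Pc]
            ring

end BTAux

namespace BTAux

lemma ofFn_perm_mem (n : ℕ) (σ : Equiv.Perm (Fin n)) :
    (List.ofFn fun i => (σ i : ℕ)) ∈ perms (List.range n) := by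
  rw [mem_perms]
  have h1 : (List.ofFn fun i => (σ i : ℕ))
      = List.map Fin.val (List.map σ (List.finRange n)) := by
    rw [List.map_map, List.ofFn_eq_map]
    simp [Function.comp]
  rw [h1]
  have h2 : (List.map σ (List.finRange n)).Perm (List.finRange n) := by
    apply List.perm_of_nodup_nodup_toFinset_eq
    · exact (List.nodup_finRange n).map σ.injective
    · exact List.nodup_finRange n
    · apply Finset.ext
      intro i
      simp only [List.mem_toFinset, List.mem_map, List.mem_finRange, true_and]
      exact ⟨fun _ => trivial, fun _ => ⟨σ.symm i, by simp⟩⟩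
  have h3 : List.map Fin.val (List.finRange n) = List.range n := by
    simp
  have h4 := h2.map Fin.val
  rw [h3] at h4
  exact h4

lemma perms_range (n : ℕ) :
    perms (List.range n) = (Finset.univ.val : Multiset (Equiv.Perm (Fin n))).map
      (fun σ => List.ofFn fun i => (σ i : ℕ)) := by
  have hinj : Function.Injective (fun σ : Equiv.Perm (Fin n) =>
      List.ofFn fun i => (σ i : ℕ)) := by
    intro σ τ h
    have h2 := List.ofFn_injective h
    ext i
    exact congrFun h2 i ▸ rfl
  symm
  apply Multiset.eq_of_le_of_card_le
  · rw [Multiset.le_iff_subset (Multiset.Nodup.map hinj Finset.univ.nodup)]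
    intro xs hxs
    rw [Multiset.mem_map] at hxs
    obtain ⟨σ, -, rfl⟩ := hxs
    exact ofFn_perm_mem n σ
  · rw [Multiset.card_map, card_perms, List.length_range]
    have : Multiset.card Finset.univ.val = Fintype.card (Equiv.Perm (Fin n)) := rfl
    rw [this, Fintype.card_perm, Fintype.card_fin]

lemma sum_perm_eq (n : ℕ) {M : Type*} [AddCommMonoid M] (f : List ℕ → M) :
    (∑ σ : Equiv.Perm (Fin n), f (List.ofFn fun i => (σ i : ℕ)))
      = ((perms (List.range n)).map f).sum := by
  rw [perms_range, Multiset.map_map]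
  rfl

end BTAux

/-- The expected height of a randomly built binary search tree on `n`
distinct keys (inserted in uniformly random order) is `O(log n)`; more precisely,
the expected height is at most `3·log₂ n` for all `n ≥ 2`. -/
theorem stmt_19 (n : ℕ) (hn : 2 ≤ n) :
    (∑ σ : Equiv.Perm (Fin n),
        ((BT.build (List.ofFn fun i : Fin n => (σ i : ℕ))).height : ℝ))
      / (Nat.factorial n) ≤ 3 * Real.logb 2 n := by
  have hfactpos : (0:ℝ) < (Nat.factorial n : ℝ) := by exact_mod_cast Nat.factorial_pos n
  by_cases h2 : n = 2
  · subst h2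
    have hb : ∀ σ : Equiv.Perm (Fin 2),
        ((BT.build (List.ofFn fun i : Fin 2 => (σ i : ℕ))).height : ℝ) ≤ 2 := by
      intro σ
      have h := BTAux.height_build_le (List.ofFn fun i : Fin 2 => (σ i : ℕ))
      rw [List.length_ofFn] at h
      exact_mod_cast h
    have hcard : (Finset.univ : Finset (Equiv.Perm (Fin 2))).card = 2 := by
      rw [Finset.card_univ, Fintype.card_perm, Fintype.card_fin]; rfl
    have hsum : (∑ σ : Equiv.Perm (Fin 2),
        ((BT.build (List.ofFn fun i : Fin 2 => (σ i : ℕ))).height : ℝ)) ≤ 4 := by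
      calc (∑ σ : Equiv.Perm (Fin 2),
            ((BT.build (List.ofFn fun i : Fin 2 => (σ i : ℕ))).height : ℝ))
          ≤ ∑ _σ : Equiv.Perm (Fin 2), (2:ℝ) := Finset.sum_le_sum (fun σ _ => hb σ)
        _ = 4 := by rw [Finset.sum_const, hcard]; norm_num
    have hlogb : Real.logb 2 ((2:ℕ):ℝ) = 1 := by
      rw [Nat.cast_ofNat, Real.logb_self_eq_one (by norm_num)]
    rw [hlogb]
    have hfact2 : ((Nat.factorial 2 : ℕ) : ℝ) = 2 := by norm_num [Nat.factorial]
    rw [hfact2, div_le_iff₀ (by norm_num : (0:ℝ) < 2)]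
    linarith
  · have hn3 : 3 ≤ n := by omega
    set L := List.range n with hL
    set F : List ℕ → ℕ := fun xs => 2 ^ (BT.build xs).height with hF
    have hmain := BTAux.main_bound n L List.length_range List.nodup_range
    have hBdef : (∑ σ : Equiv.Perm (Fin n),
        ((2:ℝ) ^ (BT.build (List.ofFn fun i : Fin n => (σ i : ℕ))).height))
        = ((BTAux.W L F : ℕ) : ℝ) := by
      have hc : ((∑ σ : Equiv.Perm (Fin n), F (List.ofFn fun i : Fin n => (σ i : ℕ)) : ℕ) : ℝ)
          = ∑ σ : Equiv.Perm (Fin n),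
              ((2:ℝ) ^ (BT.build (List.ofFn fun i : Fin n => (σ i : ℕ))).height) := by
        push_cast [hF]
        rfl
      rw [← hc]
      congr 1
      exact BTAux.sum_perm_eq n F
    have hcard : (Finset.univ : Finset (Equiv.Perm (Fin n))).card = Nat.factorial n := by
      rw [Finset.card_univ, Fintype.card_perm, Fintype.card_fin]
    have hwsum : ∑ _σ : Equiv.Perm (Fin n), ((Nat.factorial n : ℝ))⁻¹ = 1 := by
      rw [Finset.sum_const, hcard, nsmul_eq_mul]
      field_simp
    have hconc : ConcaveOn ℝ (Set.Ioi (0:ℝ)) (Real.logb 2) := by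
      have h0 : (0:ℝ) ≤ (Real.log 2)⁻¹ := inv_nonneg.2 (Real.log_nonneg one_le_two)
      have h := (strictConcaveOn_log_Ioi.concaveOn).smul h0
      have heq : Real.logb 2 = fun x => (Real.log 2)⁻¹ • Real.log x := by
        funext x
        simp [Real.logb, smul_eq_mul, div_eq_inv_mul]
      rw [heq]; exact h
    have hjensen := hconc.le_map_sum (t := (Finset.univ : Finset (Equiv.Perm (Fin n))))
      (w := fun _ => ((Nat.factorial n : ℝ))⁻¹)
      (p := fun σ => (2:ℝ) ^ (BT.build (List.ofFn fun i : Fin n => (σ i : ℕ))).height)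
      (fun σ _ => by positivity) hwsum
      (fun σ _ => Set.mem_Ioi.2 (by positivity))
    have hterm : ∀ σ : Equiv.Perm (Fin n),
        ((Nat.factorial n : ℝ))⁻¹ • Real.logb 2
          ((2:ℝ) ^ (BT.build (List.ofFn fun i : Fin n => (σ i : ℕ))).height)
        = ((BT.build (List.ofFn fun i : Fin n => (σ i : ℕ))).height : ℝ)
            / (Nat.factorial n : ℝ) := by
      intro σ
      rw [Real.logb_pow, Real.logb_self_eq_one (by norm_num), mul_one, smul_eq_mul,
        inv_mul_eq_div]
    have hLHS : (∑ σ : Equiv.Perm (Fin n),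
        ((Nat.factorial n : ℝ))⁻¹ • Real.logb 2
          ((2:ℝ) ^ (BT.build (List.ofFn fun i : Fin n => (σ i : ℕ))).height))
        = (∑ σ : Equiv.Perm (Fin n),
            ((BT.build (List.ofFn fun i : Fin n => (σ i : ℕ))).height : ℝ))
          / (Nat.factorial n : ℝ) := by
      rw [Finset.sum_div]
      exact Finset.sum_congr rfl (fun σ _ => hterm σ)
    have hQ : (∑ σ : Equiv.Perm (Fin n), ((Nat.factorial n : ℝ))⁻¹ •
          ((2:ℝ) ^ (BT.build (List.ofFn fun i : Fin n => (σ i : ℕ))).height))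
        = ((BTAux.W L F : ℕ) : ℝ) / (Nat.factorial n : ℝ) := by
      simp only [smul_eq_mul]
      rw [← Finset.mul_sum, hBdef, inv_mul_eq_div]
    have hQpos : (0:ℝ) < ((BTAux.W L F : ℕ) : ℝ) / (Nat.factorial n : ℝ) := by
      rw [← hQ]
      apply Finset.sum_pos
      · intro σ _
        positivity
      · exact Finset.univ_nonempty
    have hbound : ((BTAux.W L F : ℕ) : ℝ) / (Nat.factorial n : ℝ) ≤ ((n:ℝ))^3 := by
      have hPc' : ((BTAux.Pc n : ℕ) : ℝ) ≤ 6 * (n:ℝ)^3 := by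
        have hz : ((n:ℝ)+1)*((n:ℝ)+2)*((n:ℝ)+3) ≤ 6*(n:ℝ)^3 := by
          have hx : (3:ℝ) ≤ (n:ℝ) := by exact_mod_cast hn3
          have hx0 : (0:ℝ) ≤ (n:ℝ) := by linarith
          have h1 : 3*(n:ℝ) ≤ (n:ℝ)*(n:ℝ) := mul_le_mul_of_nonneg_right hx hx0
          have h2 : 3*((n:ℝ)*(n:ℝ)) ≤ (n:ℝ)*((n:ℝ)*(n:ℝ)) :=
            mul_le_mul_of_nonneg_right hx (by nlinarith [h1])
          nlinarith [h1, h2, hx]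
        unfold BTAux.Pc
        push_cast
        linarith
      have h6' : (6:ℝ) * ((BTAux.W L F : ℕ) : ℝ)
          ≤ ((Nat.factorial n : ℕ) : ℝ) * ((BTAux.Pc n : ℕ) : ℝ) := by
        exact_mod_cast hmain
      rw [div_le_iff₀ hfactpos]
      have h7 : ((Nat.factorial n : ℕ) : ℝ) * ((BTAux.Pc n : ℕ) : ℝ)
          ≤ ((Nat.factorial n : ℕ) : ℝ) * (6 * (n:ℝ)^3) :=
        mul_le_mul_of_nonneg_left hPc' (le_of_lt hfactpos)
      nlinarith [h6', h7, hfactpos]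
    calc (∑ σ : Equiv.Perm (Fin n),
          ((BT.build (List.ofFn fun i : Fin n => (σ i : ℕ))).height : ℝ))
        / (Nat.factorial n : ℝ)
        = ∑ σ : Equiv.Perm (Fin n), ((Nat.factorial n : ℝ))⁻¹ • Real.logb 2
            ((2:ℝ) ^ (BT.build (List.ofFn fun i : Fin n => (σ i : ℕ))).height) := hLHS.symm
      _ ≤ Real.logb 2 (∑ σ : Equiv.Perm (Fin n), ((Nat.factorial n : ℝ))⁻¹ •
            ((2:ℝ) ^ (BT.build (List.ofFn fun i : Fin n => (σ i : ℕ))).height)) := hjensen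
      _ = Real.logb 2 (((BTAux.W L F : ℕ) : ℝ) / (Nat.factorial n : ℝ)) := by rw [hQ]
      _ ≤ Real.logb 2 (((n:ℝ))^3) :=
          (Real.logb_le_logb (by norm_num) hQpos (by positivity)).2 hbound
      _ = 3 * Real.logb 2 n := by
          rw [Real.logb_pow]
          norm_num
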